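/- Let ζ : ℝ₊ → ℝ be measurable with 0 < ζ_min ≤ ζ(a) ≤ ζ_max for all a ≥ 0, and let β > 0. Then there exists a unique Lebesgue-integrable function ρ : ℝ₊ → ℝ satisfying, for every a ≥ 0, ρ(a) = β·( 1 − ∫₀^∞ ρ(ã) dã )·exp( − ∫₀^a ζ(s) ds ). Moreover this ρ is nonnegative, and its total mass μ₀ := ∫₀^∞ ρ(a) da satisfies 0 < μ₀ < 1; explicitly μ₀ = βI/(1 + βI) where I := ∫₀^∞ exp( − ∫₀^a ζ(s) ds ) da. -/

import Mathlib

open MeasureTheory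

/-- Well-posedness of the limit age-structured problem at a
frozen space-time point: there is a unique integrable `ρ` on `ℝ₊` with
`ρ(a) = β (1 − ∫₀^∞ ρ) exp(−∫₀^a ζ)` for all `a ≥ 0`; it is nonnegative and
its total mass `μ₀` satisfies `0 < μ₀ < 1`, explicitly `μ₀ = βI/(1+βI)` with
`I = ∫₀^∞ exp(−∫₀^a ζ) da`. -/
theorem stmt11
    (ζ : ℝ → ℝ) (hζm : Measurable ζ) (ζmin ζmax β : ℝ)
    (hζmin : 0 < ζmin) (hβ : 0 < β)
    (hζ : ∀ a, 0 ≤ a → ζmin ≤ ζ a ∧ ζ a ≤ ζmax) :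
    ∃ ρ : ℝ → ℝ,
      IntegrableOn ρ (Set.Ioi 0) ∧
      (∀ a, 0 ≤ a →
        ρ a = β * (1 - ∫ b in Set.Ioi (0:ℝ), ρ b) *
          Real.exp (-∫ s in (0:ℝ)..a, ζ s)) ∧
      (∀ a, 0 ≤ a → 0 ≤ ρ a) ∧
      (0 < ∫ a in Set.Ioi (0:ℝ), ρ a) ∧
      ((∫ a in Set.Ioi (0:ℝ), ρ a) < 1) ∧
      ((∫ a in Set.Ioi (0:ℝ), ρ a) =
        β * (∫ a in Set.Ioi (0:ℝ), Real.exp (-∫ s in (0:ℝ)..a, ζ s)) /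
          (1 + β * ∫ a in Set.Ioi (0:ℝ), Real.exp (-∫ s in (0:ℝ)..a, ζ s))) ∧
      (∀ ρ' : ℝ → ℝ, IntegrableOn ρ' (Set.Ioi 0) →
        (∀ a, 0 ≤ a →
          ρ' a = β * (1 - ∫ b in Set.Ioi (0:ℝ), ρ' b) *
            Real.exp (-∫ s in (0:ℝ)..a, ζ s)) →
        ∀ a, 0 ≤ a → ρ' a = ρ a) := by
  -- modified rate, globally bounded
  set ζ' : ℝ → ℝ := fun a => if 0 ≤ a then ζ a else ζmin with hζ'def
  have hζ'm : Measurable ζ' := Measurable.ite (measurableSet_le measurable_const measurable_id) hζm measurable_const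
  have hζ'bd : ∀ a, ‖ζ' a‖ ≤ max ζmax ζmin := by
    intro a
    simp only [hζ'def, Real.norm_eq_abs]
    split_ifs with h
    · rcases hζ a h with ⟨h1, h2⟩
      rw [abs_le]
      constructor
      · nlinarith [le_max_right ζmax ζmin]
      · exact le_trans h2 (le_max_left _ _)
    · rw [abs_of_pos hζmin]; exact le_max_right _ _
  have hζ'int : ∀ a b : ℝ, IntervalIntegrable ζ' volume a b := by
    intro a b
    rw [intervalIntegrable_iff]
    exact Measure.integrableOn_of_bounded measure_Ioc_lt_top.ne
      hζ'm.aestronglyMeasurable (Filter.Eventually.of_forall fun x => hζ'bd x)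
  set g : ℝ → ℝ := fun b => ∫ s in (0:ℝ)..b, ζ' s with hgdef
  have hgcont : Continuous g := intervalIntegral.continuous_primitive hζ'int 0
  have hgeq : ∀ a : ℝ, 0 ≤ a → (∫ s in (0:ℝ)..a, ζ s) = g a := by
    intro a ha
    apply intervalIntegral.integral_congr
    intro s hs
    rw [Set.uIcc_of_le ha] at hs
    simp [hζ'def, hs.1]
  have hglb : ∀ a : ℝ, 0 ≤ a → ζmin * a ≤ g a := by
    intro a ha
    have := intervalIntegral.integral_mono_on ha (intervalIntegrable_const (c := ζmin)) (hζ'int 0 a)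
      (fun x hx => by simp [hζ'def, hx.1, (hζ x hx.1).1])
    simpa [mul_comm] using this
  set E : ℝ → ℝ := fun a => Real.exp (-g a) with hEdef
  have hEcont : Continuous E := (hgcont.neg).rexp
  have hEpos : ∀ a, 0 < E a := fun a => Real.exp_pos _
  have hEexp : ∀ a : ℝ, 0 ≤ a → Real.exp (-∫ s in (0:ℝ)..a, ζ s) = E a := by
    intro a ha; rw [hgeq a ha]
  have hEint : IntegrableOn E (Set.Ioi 0) := by
    apply Integrable.mono' (exp_neg_integrableOn_Ioi 0 hζmin)
      (hEcont.aestronglyMeasurable.restrict)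
    rw [ae_restrict_iff' measurableSet_Ioi]
    filter_upwards with a ha
    have ha' : (0:ℝ) ≤ a := le_of_lt ha
    rw [Real.norm_eq_abs, abs_of_pos (hEpos a)]
    exact Real.exp_le_exp.mpr (by linarith [hglb a ha'])
  set I : ℝ := ∫ a in Set.Ioi (0:ℝ), E a with hIdef
  have hIstmt : (∫ a in Set.Ioi (0:ℝ), Real.exp (-∫ s in (0:ℝ)..a, ζ s)) = I := by
    apply setIntegral_congr_fun measurableSet_Ioi
    intro a ha; exact hEexp a (le_of_lt ha)
  have hI : 0 < I := by
    rw [hIdef]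
    rw [setIntegral_pos_iff_support_of_nonneg_ae
      (Filter.Eventually.of_forall fun a => (hEpos a).le) hEint]
    have : Function.support E = Set.univ := by
      ext a; simp [Function.support, (hEpos a).ne']
    rw [this, Set.univ_inter]
    simp
  have hden : (0:ℝ) < 1 + β * I := by positivity
  set c : ℝ := β / (1 + β * I) with hcdef
  have hc : 0 < c := div_pos hβ hden
  have hmass : (∫ a in Set.Ioi (0:ℝ), c * E a) = c * I := by
    rw [integral_const_mul, hIdef]
  have hkey : β * (1 - c * I) = c := by
    rw [hcdef]; field_simp; ring
  refine ⟨fun a => c * E a, hEint.const_mul c, ?_, ?_, ?_, ?_, ?_, ?_⟩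
  · intro a ha
    simp only
    rw [hmass, hEexp a ha, hkey]
  · intro a ha; exact (mul_pos hc (hEpos a)).le
  · simp only [hmass]; exact mul_pos hc hI
  · simp only [hmass]; rw [hcdef]
    rw [div_mul_eq_mul_div, div_lt_one hden]
    nlinarith
  · simp only
    rw [hmass, hIstmt, hcdef, div_mul_eq_mul_div]
  · intro ρ' hρ'int hρ'eq a ha
    set m : ℝ := ∫ b in Set.Ioi (0:ℝ), ρ' b with hmdef
    have hm : m = β * (1 - m) * I := by
      rw [hmdef]
      calc (∫ b in Set.Ioi (0:ℝ), ρ' b)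
          = ∫ b in Set.Ioi (0:ℝ), β * (1 - m) * E b := by
            apply setIntegral_congr_fun measurableSet_Ioi
            intro b hb
            rw [hρ'eq b (le_of_lt hb), hEexp b (le_of_lt hb), hmdef]
        _ = β * (1 - m) * I := by rw [integral_const_mul]
    have hmval : m = c * I := by
      have h1 : m * (1 + β * I) = β * I := by nlinarith [hm]
      have h2 : c * I * (1 + β * I) = β * I := by
        rw [hcdef]; field_simp
      have := hden.ne'
      nlinarith [h1, h2]
    rw [hρ'eq a ha, hEexp a ha, hmval, hkey]
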